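/- For monotone submodular valuations over goods, EFL_WC (indeed full envy-freeness) does not guarantee more than a 1/n fraction of the maximin share: in the instance with n agents, n² goods y^i_j (1 ≤ i, j ≤ n), one copy each, and common valuation v(S) = |{i : ∃j, y^i_j ∈ S}|, the allocation giving agent θ the bundle {y^θ_1, …, y^θ_n} is envy-free but gives each agent value 1, while the maximin share equals n. -/
import Mathlib


open Finset

def IsAlloc {τ : Type*} [Fintype τ] [DecidableEq τ] (n : ℕ) (k : τ → ℕ)
    (A : Fin n → Finset τ) : Prop :=
  ∀ t, (Finset.univ.filter fun i => t ∈ A i).card = k t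

/-- MMS for a general (not necessarily additive) valuation. -/
noncomputable def MMSgen {τ : Type*} [Fintype τ] [DecidableEq τ] (n : ℕ)
    (k : τ → ℕ) (V : Finset τ → ℝ) : ℝ :=
  ⨆ B : {B : Fin n → Finset τ // IsAlloc n k B}, ⨅ j, V (B.1 j)

/-- The common valuation: number of groups represented in the bundle. -/
noncomputable def Vsub (n : ℕ) (S : Finset (Fin n × Fin n)) : ℝ :=
  ((S.image Prod.fst).card : ℝ)

lemma Vsub_mono (n : ℕ) : ∀ S₁ S₂ : Finset (Fin n × Fin n), S₁ ⊆ S₂ →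
    Vsub n S₁ ≤ Vsub n S₂ := by
  intro S₁ S₂ h
  unfold Vsub
  exact_mod_cast Finset.card_le_card (Finset.image_subset_image h)

lemma Vsub_le_n (n : ℕ) (S : Finset (Fin n × Fin n)) : Vsub n S ≤ n := by
  unfold Vsub
  have := Finset.card_le_univ (S.image Prod.fst)
  simpa using (Nat.cast_le.mpr this : ((S.image Prod.fst).card : ℝ) ≤ _)

lemma Vsub_A (n : ℕ) (hn : 0 < n) (θ : Fin n) :
    Vsub n (Finset.univ.filter fun p : Fin n × Fin n => p.1 = θ) = 1 := by
  have himg : (Finset.univ.filter fun p : Fin n × Fin n => p.1 = θ).image Prod.fst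
      = {θ} := by
    apply Finset.Subset.antisymm
    · intro x hx
      simp only [Finset.mem_image, Finset.mem_filter] at hx
      obtain ⟨p, ⟨_, hp⟩, rfl⟩ := hx
      simp [hp]
    · intro x hx
      simp only [Finset.mem_singleton] at hx
      subst hx
      exact Finset.mem_image.mpr ⟨(x, ⟨0, hn⟩), by simp, rfl⟩
  unfold Vsub
  rw [himg]
  simp

/-- The valuation V(S) = |{i : ∃ j, y^i_j ∈ S}| over the n²
goods y^i_j is monotone and submodular; the allocation giving agent θ the
bundle {y^θ_1,…,y^θ_n} is an exclusive allocation that is envy-free, yet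
gives every agent value 1 while the maximin share equals n. Hence for
monotone submodular valuations, envy-freeness (and so EFL_WC) guarantees no
more than 1/n of MMS. -/
theorem submodular_ef_mms_gap (n : ℕ) (hn : 0 < n)
    (A : Fin n → Finset (Fin n × Fin n))
    (hAdef : A = fun θ => Finset.univ.filter fun p => p.1 = θ) :
    (∀ S₁ S₂ : Finset (Fin n × Fin n), S₁ ⊆ S₂ → Vsub n S₁ ≤ Vsub n S₂) ∧
    (∀ S₁ S₂ : Finset (Fin n × Fin n),
      Vsub n (S₁ ∪ S₂) + Vsub n (S₁ ∩ S₂) ≤ Vsub n S₁ + Vsub n S₂) ∧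
    IsAlloc n (fun _ => 1) A ∧
    (∀ i j, Vsub n (A j) ≤ Vsub n (A i)) ∧
    (∀ i, Vsub n (A i) = 1) ∧
    MMSgen n (fun _ => 1) (Vsub n) = n := by
  have hval : ∀ i, Vsub n (A i) = 1 := by
    intro i; rw [hAdef]; exact Vsub_A n hn i
  refine ⟨Vsub_mono n, ?_, ?_, ?_, hval, ?_⟩
  · -- submodular
    intro S₁ S₂
    unfold Vsub
    have h1 : (S₁ ∪ S₂).image Prod.fst = S₁.image Prod.fst ∪ S₂.image Prod.fst :=
      Finset.image_union _ _
    have h2 : (S₁ ∩ S₂).image Prod.fst ⊆ S₁.image Prod.fst ∩ S₂.image Prod.fst :=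
      Finset.image_inter_subset _ _ _
    have h3 : ((S₁ ∪ S₂).image Prod.fst).card + ((S₁ ∩ S₂).image Prod.fst).card ≤
        (S₁.image Prod.fst).card + (S₂.image Prod.fst).card := by
      calc ((S₁ ∪ S₂).image Prod.fst).card + ((S₁ ∩ S₂).image Prod.fst).card
          ≤ (S₁.image Prod.fst ∪ S₂.image Prod.fst).card +
            (S₁.image Prod.fst ∩ S₂.image Prod.fst).card := by
            rw [h1]; exact Nat.add_le_add_left (Finset.card_le_card h2) _
        _ = (S₁.image Prod.fst).card + (S₂.image Prod.fst).card :=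
            Finset.card_union_add_card_inter _ _
    exact_mod_cast h3
  · -- IsAlloc
    intro t
    rw [hAdef]
    have : (Finset.univ.filter fun i : Fin n =>
        t ∈ Finset.univ.filter fun p : Fin n × Fin n => p.1 = i) = {t.1} := by
      ext i; simp [eq_comm]
    rw [this]; simp
  · -- envy-free
    intro i j; rw [hval i, hval j]
  · -- MMS = n
    have hBalloc : IsAlloc n (fun _ => 1)
        (fun j => Finset.univ.filter fun p : Fin n × Fin n => p.2 = j) := by
      intro t
      have : (Finset.univ.filter fun i : Fin n =>
          t ∈ Finset.univ.filter fun p : Fin n × Fin n => p.2 = i) = {t.2} := by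
        ext i; simp [eq_comm]
      rw [this]; simp
    have hBval : ∀ j : Fin n,
        Vsub n (Finset.univ.filter fun p : Fin n × Fin n => p.2 = j) = n := by
      intro j
      unfold Vsub
      have : (Finset.univ.filter fun p : Fin n × Fin n => p.2 = j).image Prod.fst
          = Finset.univ := by
        apply Finset.eq_univ_of_forall
        intro i
        exact Finset.mem_image.mpr ⟨(i, j), by simp, rfl⟩
      rw [this]; simp
    haveI : Nonempty (Fin n) := ⟨⟨0, hn⟩⟩
    haveI : Nonempty {B // IsAlloc n (fun _ => 1) B} := ⟨⟨_, hBalloc⟩⟩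
    have key : ∀ B : {B // IsAlloc n (fun _ => 1) B},
        (⨅ j, Vsub n (B.1 j)) ≤ n := by
      intro B
      calc ⨅ j, Vsub n (B.1 j) ≤ Vsub n (B.1 ⟨0, hn⟩) :=
            ciInf_le (Finite.bddBelow_range _) _
        _ ≤ n := Vsub_le_n n _
    have hbdd : BddAbove (Set.range fun B : {B // IsAlloc n (fun _ => 1) B} =>
        ⨅ j, Vsub n (B.1 j)) := ⟨n, by rintro x ⟨B, rfl⟩; exact key B⟩
    show (⨆ B : {B // IsAlloc n (fun _ => 1) B}, ⨅ j, Vsub n (B.1 j)) = n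
    apply le_antisymm
    · exact ciSup_le key
    · have h1 : (n : ℝ) ≤ ⨅ j, Vsub n ((⟨_, hBalloc⟩ :
          {B // IsAlloc n (fun _ => 1) B}).1 j) := by
        apply le_ciInf
        intro j
        rw [hBval j]
      exact h1.trans (le_ciSup hbdd _)
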